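/- (Asymptotic expansion of the standard normal quantile) Let t : (0,1) → ℝ be the inverse of the standard normal CDF, i.e. Φ(t(q)) = q for all q ∈ (0,1). Then as q → 0⁺, t(q) → −∞ and t(q)² + 2 log q + log(−2 log q) + log(2π) → 0; in particular lim_{q→0⁺} t(q)/√(−2 log q) = −1. -/

import Mathlib

open MeasureTheory Real Filter

/-- The standard normal density `φ(x) = (2π)^{-1/2} exp(-x²/2)`. -/
noncomputable def stdNormalPDF (x : ℝ) : ℝ :=
  (Real.sqrt (2 * Real.pi))⁻¹ * Real.exp (-x ^ 2 / 2)

/-- The standard normal CDF `Φ(x) = ∫_{-∞}^x φ(t) dt`. -/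
noncomputable def stdNormalCDF (x : ℝ) : ℝ :=
  ∫ t in Set.Iio x, stdNormalPDF t

/-- `τ_p = √(2 log p)`. -/
noncomputable def tauP (p : ℕ) : ℝ := Real.sqrt (2 * Real.log p)

/-- The density of `N(μ_p, τ_p²)` at `x`, namely `τ_p⁻¹ φ((x - μ_p)/τ_p)`. -/
noncomputable def mvpDens (μ : ℕ → ℝ) (p : ℕ) (x : ℝ) : ℝ :=
  (tauP p)⁻¹ * stdNormalPDF ((x - μ p) / tauP p)

open Set Topology

lemma pdf_pos (x : ℝ) : 0 < stdNormalPDF x := by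
  unfold stdNormalPDF
  positivity

lemma pdf_cont : Continuous stdNormalPDF := by
  unfold stdNormalPDF
  fun_prop

lemma pdf_integrable : Integrable stdNormalPDF := by
  have h := integrable_exp_neg_mul_sq (b := (1/2:ℝ)) (by norm_num)
  have : stdNormalPDF = fun x => (Real.sqrt (2 * Real.pi))⁻¹ * Real.exp (-(1/2) * x ^ 2) := by
    funext x; unfold stdNormalPDF; ring_nf
  rw [this]
  exact h.const_mul _

lemma cdf_mono : Monotone stdNormalCDF := fun x y h =>
  setIntegral_mono_set pdf_integrable.integrableOn
    (Filter.Eventually.of_forall fun t => (pdf_pos t).le)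
    (HasSubset.Subset.eventuallyLE (Set.Iio_subset_Iio h))

lemma cdf_pos (x : ℝ) : 0 < stdNormalCDF x := by
  unfold stdNormalCDF
  rw [setIntegral_pos_iff_support_of_nonneg_ae
    (Filter.Eventually.of_forall fun t => (pdf_pos t).le) pdf_integrable.integrableOn]
  have : Function.support stdNormalPDF = Set.univ := by
    ext t; simp [Function.mem_support, (pdf_pos t).ne']
  rw [this, Set.univ_inter]
  simp [Real.volume_Iio]

lemma pdf_hasDerivAt (y : ℝ) :
    HasDerivAt stdNormalPDF (-y * stdNormalPDF y) y := by
  have h1 : HasDerivAt (fun t : ℝ => -t ^ 2 / 2) (-y) y := by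
    have := ((hasDerivAt_pow 2 y).neg).div_const 2
    simpa using this.congr_deriv (by ring)
  have h2 := (h1.exp).const_mul (Real.sqrt (2 * Real.pi))⁻¹
  unfold stdNormalPDF
  refine h2.congr_deriv ?_
  ring

lemma tendsto_pdf_atBot : Tendsto stdNormalPDF atBot (𝓝 0) := by
  have h1 : Tendsto (fun t : ℝ => -t ^ 2 / 2) atBot atBot := by
    have hsq : Tendsto (fun t : ℝ => t ^ 2) atBot atTop := by
      have h := (tendsto_id (α := ℝ) (x := atBot)).atBot_mul_atBot₀
        (tendsto_id (α := ℝ) (x := atBot))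
      exact h.congr fun t => by simp [Pi.mul_apply]; ring
    exact (tendsto_neg_atTop_atBot.comp hsq).atBot_div_const (by norm_num)
  have h2 := (Real.tendsto_exp_atBot.comp h1).const_mul (Real.sqrt (2 * Real.pi))⁻¹
  rw [mul_zero] at h2
  exact h2.congr fun s => by simp only [Function.comp_apply, stdNormalPDF]

lemma tendsto_inv_atBot_zero' : Tendsto (fun t : ℝ => t⁻¹) atBot (𝓝 0) := by
  have h := (tendsto_inv_atTop_zero (𝕜 := ℝ)).comp tendsto_neg_atBot_atTop
  have h2 := h.neg
  rw [neg_zero] at h2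
  exact h2.congr fun s => by simp [Function.comp, inv_neg]

lemma aux_integrable (x : ℝ) (hx : x < 0) :
    IntegrableOn (fun s => stdNormalPDF s / s ^ 2) (Set.Iic x) := by
  apply Integrable.mono' ((pdf_integrable.const_mul (x⁻¹ ^ 2)).integrableOn)
  · exact (pdf_cont.measurable.div (measurable_id.pow_const 2)).aestronglyMeasurable.restrict
  · refine (ae_restrict_iff' measurableSet_Iic).2 (Filter.Eventually.of_forall fun s hs => ?_)
    have hs0 : s < 0 := lt_of_le_of_lt hs hx
    have h1 : stdNormalPDF s / s ^ 2 ≤ x⁻¹ ^ 2 * stdNormalPDF s := by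
      rw [div_eq_mul_inv, mul_comm, inv_pow]
      apply mul_le_mul_of_nonneg_right _ (pdf_pos s).le
      have hsx : s ≤ x := hs
      have hx2 : (0:ℝ) < x ^ 2 := by nlinarith
      have hle : x ^ 2 ≤ s ^ 2 := by
        nlinarith [mul_nonneg (sub_nonneg.2 hsx) (by linarith : (0:ℝ) ≤ -(x + s))]
      exact inv_anti₀ hx2 hle
    rw [Real.norm_eq_abs, abs_of_nonneg (div_nonneg (pdf_pos s).le (sq_nonneg s))]
    exact h1

lemma key_identity (x : ℝ) (hx : x < 0) :
    ∫ s in Set.Iio x, (stdNormalPDF s + stdNormalPDF s / s ^ 2) = -stdNormalPDF x / x := by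
  have hderiv : ∀ y ∈ Set.Iio x, HasDerivAt (fun s => -stdNormalPDF s / s)
      (stdNormalPDF y + stdNormalPDF y / y ^ 2) y := by
    intro y hy
    have hy0 : y ≠ 0 := (hy.trans hx).ne
    have := ((pdf_hasDerivAt y).neg).div (hasDerivAt_id y) hy0
    refine HasDerivAt.congr_deriv (f := fun s => -stdNormalPDF s / s) this ?_
    simp only [id, Pi.neg_apply]
    field_simp
    ring
  have f'int : IntegrableOn (fun s => stdNormalPDF s + stdNormalPDF s / s ^ 2) (Set.Iic x) := by
    apply Integrable.mono' ((pdf_integrable.const_mul (1 + x⁻¹ ^ 2)).integrableOn)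
    · apply AEStronglyMeasurable.add pdf_cont.aestronglyMeasurable.restrict
      exact (pdf_cont.measurable.div (measurable_id.pow_const 2)).aestronglyMeasurable.restrict
    · refine (ae_restrict_iff' measurableSet_Iic).2 (Filter.Eventually.of_forall fun s hs => ?_)
      have hs0 : s < 0 := lt_of_le_of_lt hs hx
      have h1 : stdNormalPDF s / s ^ 2 ≤ stdNormalPDF s * x⁻¹ ^ 2 := by
        rw [div_eq_mul_inv, ← inv_pow]
        apply mul_le_mul_of_nonneg_left _ (pdf_pos s).le
        rw [inv_pow, inv_pow]
        have hsx : s ≤ x := hs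
        have hx2 : (0:ℝ) < x ^ 2 := by nlinarith
        have hle : x ^ 2 ≤ s ^ 2 := by
          nlinarith [mul_nonneg (sub_nonneg.2 hsx) (by linarith : (0:ℝ) ≤ -(x + s))]
        exact inv_anti₀ hx2 hle
      have hnn : 0 ≤ stdNormalPDF s + stdNormalPDF s / s ^ 2 :=
        add_nonneg (pdf_pos s).le (div_nonneg (pdf_pos s).le (sq_nonneg s))
      rw [Real.norm_eq_abs, abs_of_nonneg hnn]
      nlinarith [pdf_pos s]
  have hcont : ContinuousWithinAt (fun s => -stdNormalPDF s / s) (Set.Iic x) x := by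
    exact ((pdf_cont.neg.continuousAt.div continuousAt_id hx.ne).continuousWithinAt)
  have hlim : Tendsto (fun s => -stdNormalPDF s / s) atBot (𝓝 0) := by
    have := (tendsto_pdf_atBot.neg).mul tendsto_inv_atBot_zero'
    simpa [div_eq_mul_inv] using this
  have := integral_Iic_of_hasDerivAt_of_tendsto hcont hderiv f'int hlim
  rw [← integral_Iic_eq_integral_Iio, this, sub_zero]

lemma cdf_split (x : ℝ) (hx : x < 0) :
    stdNormalCDF x + ∫ s in Set.Iio x, stdNormalPDF s / s ^ 2 = -stdNormalPDF x / x := by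
  rw [← key_identity x hx, stdNormalCDF]
  rw [← integral_add pdf_integrable.integrableOn
    ((aux_integrable x hx).mono_set Set.Iio_subset_Iic_self)]

lemma cdf_upper (x : ℝ) (hx : x < 0) : stdNormalCDF x ≤ -stdNormalPDF x / x := by
  have h := cdf_split x hx
  have hnn : 0 ≤ ∫ s in Set.Iio x, stdNormalPDF s / s ^ 2 :=
    setIntegral_nonneg measurableSet_Iio fun s _ => div_nonneg (pdf_pos s).le (sq_nonneg s)
  linarith

lemma cdf_lower (x : ℝ) (hx : x < 0) :
    -stdNormalPDF x / x ≤ stdNormalCDF x * (1 + x⁻¹ ^ 2) := by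
  have h := cdf_split x hx
  have hle : (∫ s in Set.Iio x, stdNormalPDF s / s ^ 2) ≤
      ∫ s in Set.Iio x, x⁻¹ ^ 2 * stdNormalPDF s := by
    apply setIntegral_mono_on ((aux_integrable x hx).mono_set Set.Iio_subset_Iic_self)
      ((pdf_integrable.const_mul _).integrableOn) measurableSet_Iio
    intro s hs
    have hs0 : s < 0 := lt_of_lt_of_le hs.out le_rfl |>.trans hx
    rw [div_eq_mul_inv, mul_comm, inv_pow]
    apply mul_le_mul_of_nonneg_right _ (pdf_pos s).le
    have hsx : s ≤ x := hs.out.le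
    have hx2 : (0:ℝ) < x ^ 2 := by nlinarith
    have hle2 : x ^ 2 ≤ s ^ 2 := by
      nlinarith [mul_nonneg (sub_nonneg.2 hsx) (by linarith : (0:ℝ) ≤ -(x + s))]
    exact inv_anti₀ hx2 hle2
  rw [integral_const_mul] at hle
  have : stdNormalCDF x * (1 + x⁻¹ ^ 2) = stdNormalCDF x + x⁻¹ ^ 2 * stdNormalCDF x := by ring
  rw [this, stdNormalCDF] at *
  linarith

lemma log_pdf (x : ℝ) :
    Real.log (stdNormalPDF x) = -(Real.log (2 * Real.pi)) / 2 - x ^ 2 / 2 := by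
  unfold stdNormalPDF
  rw [Real.log_mul (by positivity) (Real.exp_ne_zero _), Real.log_inv,
    Real.log_sqrt (by positivity), Real.log_exp]
  ring

theorem normal_quantile_asymptotics' (t : ℝ → ℝ)
    (ht : ∀ q ∈ Set.Ioo (0 : ℝ) 1, stdNormalCDF (t q) = q) :
    Filter.Tendsto t (nhdsWithin 0 (Set.Ioi 0)) Filter.atBot ∧
    Filter.Tendsto
      (fun q : ℝ => t q ^ 2 + 2 * Real.log q + Real.log (-(2 * Real.log q)) +
        Real.log (2 * Real.pi))
      (nhdsWithin 0 (Set.Ioi 0)) (nhds 0) ∧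
    Filter.Tendsto (fun q : ℝ => t q / Real.sqrt (-(2 * Real.log q)))
      (nhdsWithin 0 (Set.Ioi 0)) (nhds (-1)) := by
  set l : Filter ℝ := nhdsWithin 0 (Set.Ioi 0) with hl
  have hIoo : Set.Ioo (0:ℝ) 1 ∈ l := Ioo_mem_nhdsGT one_pos
  -- Part A
  have hA : Tendsto t l atBot := by
    rw [tendsto_atBot]
    intro b
    have hb : 0 < stdNormalCDF b := cdf_pos b
    have hmem : Set.Ioo (0:ℝ) (min (stdNormalCDF b) 1) ∈ l :=
      Ioo_mem_nhdsGT (lt_min hb one_pos)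
    filter_upwards [hmem] with q hq
    have hq01 : q ∈ Set.Ioo (0:ℝ) 1 := ⟨hq.1, lt_of_lt_of_le hq.2 (min_le_right _ _)⟩
    by_contra h
    push_neg at h
    have h2 := cdf_mono h.le
    rw [ht q hq01] at h2
    exact absurd h2 (not_le.2 (lt_of_lt_of_le hq.2 (min_le_left _ _)))
  refine ⟨hA, ?_⟩
  set E : ℝ → ℝ := fun q =>
    t q ^ 2 + 2 * Real.log q + 2 * Real.log (-(t q)) + Real.log (2 * Real.pi) with hE_def
  set L : ℝ → ℝ := fun q => -(2 * Real.log q) with hL_def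
  have htneg : ∀ᶠ q in l, t q < -1 := hA.eventually (eventually_lt_atBot (-1))
  -- bounds for E
  have hEbounds : ∀ᶠ q in l,
      -(2 * Real.log (1 + (t q)⁻¹ ^ 2)) ≤ E q ∧ E q ≤ 0 := by
    filter_upwards [hIoo, htneg] with q hq01 hx1
    set x : ℝ := t q with hx_def
    have hx0 : x < 0 := hx1.trans (by norm_num)
    have hΦ : stdNormalCDF x = q := ht q hq01
    have hxpos : 0 < -x := neg_pos.2 hx0
    have hrw : -stdNormalPDF x / x = stdNormalPDF x / (-x) := by ring
    have hlogmills : Real.log (-stdNormalPDF x / x)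
        = -(Real.log (2 * Real.pi)) / 2 - x ^ 2 / 2 - Real.log (-x) := by
      rw [hrw, Real.log_div (pdf_pos x).ne' hxpos.ne', log_pdf]
    constructor
    · -- lower bound on E
      have h2 : -stdNormalPDF x / x ≤ q * (1 + x⁻¹ ^ 2) := by
        have := cdf_lower x hx0
        rwa [hΦ] at this
      have hlhs : 0 < -stdNormalPDF x / x := by
        rw [hrw]; exact div_pos (pdf_pos x) hxpos
      have hlog := Real.log_le_log hlhs h2
      rw [hlogmills, Real.log_mul hq01.1.ne' (by positivity)] at hlog
      simp only [hE_def]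
      nlinarith [hlog]
    · -- upper bound on E
      have h1 : q ≤ -stdNormalPDF x / x := by
        have := cdf_upper x hx0
        rwa [hΦ] at this
      have hlog := Real.log_le_log hq01.1 h1
      rw [hlogmills] at hlog
      simp only [hE_def]
      nlinarith [hlog]
  -- lower bound tends to 0
  have hinv : Tendsto (fun q => (t q)⁻¹) l (𝓝 0) := tendsto_inv_atBot_zero'.comp hA
  have hlow : Tendsto (fun q => -(2 * Real.log (1 + (t q)⁻¹ ^ 2))) l (𝓝 0) := by
    have h1 : Tendsto (fun q => 1 + (t q)⁻¹ ^ 2) l (𝓝 1) := by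
      have := tendsto_const_nhds (x := (1:ℝ)) (f := l) |>.add ((hinv.pow 2))
      simpa using this
    have h2 := (Real.continuousAt_log one_ne_zero).tendsto.comp h1
    rw [Real.log_one] at h2
    have := (h2.const_mul 2).neg
    simpa using this
  have hE : Tendsto E l (𝓝 0) := by
    apply tendsto_of_tendsto_of_tendsto_of_le_of_le' hlow tendsto_const_nhds
    · exact hEbounds.mono fun q h => h.1
    · exact hEbounds.mono fun q h => h.2
  -- L tends to atTop
  have hL : Tendsto L l atTop := by
    have h1 : Tendsto (fun q : ℝ => 2 * Real.log q) l atBot :=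
      (tendsto_const_mul_atBot_of_pos two_pos).2 Real.tendsto_log_nhdsGT_zero
    exact tendsto_neg_atBot_atTop.comp h1
  have hLpos : ∀ᶠ q in l, 0 < L q := hL.eventually (eventually_gt_atTop 0)
  -- L q / t q ^ 2 → 1
  have hinvsq : Tendsto (fun q => ((t q) ^ 2)⁻¹) l (𝓝 0) := by
    have := hinv.pow 2
    simp only [inv_pow] at this
    simpa using this
  have hllog : Tendsto (fun y : ℝ => Real.log y / y ^ 2) atTop (𝓝 0) := by
    have h1 : Tendsto (fun y : ℝ => Real.log y / y) atTop (𝓝 0) :=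
      Real.isLittleO_log_id_atTop.tendsto_div_nhds_zero
    have h2 := h1.mul tendsto_inv_atTop_zero
    rw [mul_zero] at h2
    exact h2.congr fun y => by rw [pow_two]; ring
  have hu : Tendsto (fun q => -(t q)) l atTop := tendsto_neg_atBot_atTop.comp hA
  have h2logu : Tendsto (fun q => 2 * Real.log (-(t q)) / (t q) ^ 2) l (𝓝 0) := by
    have h1 := hllog.comp hu
    have h2 : (fun q => Real.log (-(t q)) / (-(t q)) ^ 2)
        = fun q => Real.log (-(t q)) / (t q) ^ 2 := by
      funext q; ring_nf
    rw [Function.comp_def, h2] at h1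
    have := h1.const_mul 2
    rw [mul_zero] at this
    exact this.congr fun q => by ring
  have hRatio : Tendsto (fun q => L q / (t q) ^ 2) l (𝓝 1) := by
    have c1 : Tendsto (fun q => Real.log (2 * Real.pi) * ((t q) ^ 2)⁻¹) l (𝓝 0) := by
      have h := hinvsq.const_mul (Real.log (2 * Real.pi)); rwa [mul_zero] at h
    have c2 : Tendsto (fun q => E q * ((t q) ^ 2)⁻¹) l (𝓝 0) := by
      have h := hE.mul hinvsq; rwa [zero_mul] at h
    have hc : Tendsto (fun q => 1 + (2 * Real.log (-(t q)) / (t q) ^ 2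
        + Real.log (2 * Real.pi) * ((t q) ^ 2)⁻¹ - E q * ((t q) ^ 2)⁻¹)) l (𝓝 1) := by
      have h := (tendsto_const_nhds (x := (1:ℝ)) (f := l)).add ((h2logu.add c1).sub c2)
      simpa using h
    refine hc.congr' ?_
    filter_upwards [htneg] with q hq
    have ht0 : t q ≠ 0 := ne_of_lt (by linarith)
    have hLe : L q = t q ^ 2 + 2 * Real.log (-(t q)) + Real.log (2 * Real.pi) - E q := by
      simp only [hE_def, hL_def]; ring
    rw [hLe]
    field_simp
    ring
  have h_t2L : Tendsto (fun q => (t q) ^ 2 / L q) l (𝓝 1) := by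
    have h := hRatio.inv₀ one_ne_zero
    rw [inv_one] at h
    exact h.congr fun q => by rw [inv_div]
  constructor
  · -- claim 2
    have hloglim : Tendsto (fun q => Real.log (L q / (t q) ^ 2)) l (𝓝 0) := by
      have h := (Real.continuousAt_log one_ne_zero).tendsto.comp hRatio
      rwa [Real.log_one] at h
    have hsum := hE.add hloglim
    rw [add_zero] at hsum
    refine hsum.congr' ?_
    filter_upwards [htneg, hLpos] with q hq hLq
    have ht0 : t q ≠ 0 := ne_of_lt (by linarith)
    have hld : Real.log (L q / t q ^ 2) = Real.log (L q) - 2 * Real.log (-(t q)) := by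
      rw [Real.log_div hLq.ne' (pow_ne_zero 2 ht0), Real.log_pow, ← Real.log_neg_eq_log (t q)]
      push_cast; ring
    rw [hld]
    simp only [hE_def, hL_def]
    ring
  · -- claim 3
    have hsq : Tendsto (fun q => Real.sqrt ((t q) ^ 2 / L q)) l (𝓝 1) := by
      have h := (Real.continuous_sqrt.tendsto 1).comp h_t2L
      rwa [Real.sqrt_one] at h
    have hneg := hsq.neg
    refine hneg.congr' ?_
    filter_upwards [htneg, hLpos] with q hq hLq
    have hsqrt : Real.sqrt (t q ^ 2 / L q) = (-(t q)) / Real.sqrt (L q) := by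
      rw [Real.sqrt_div (sq_nonneg _), Real.sqrt_sq_eq_abs, abs_of_neg (by linarith : t q < 0)]
    rw [hsqrt]
    ring


/-- Asymptotic expansion of the standard normal quantile. -/
theorem normal_quantile_asymptotics (t : ℝ → ℝ)
    (ht : ∀ q ∈ Set.Ioo (0 : ℝ) 1, stdNormalCDF (t q) = q) :
    Filter.Tendsto t (nhdsWithin 0 (Set.Ioi 0)) Filter.atBot ∧
    Filter.Tendsto
      (fun q : ℝ => t q ^ 2 + 2 * Real.log q + Real.log (-(2 * Real.log q)) +
        Real.log (2 * Real.pi))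
      (nhdsWithin 0 (Set.Ioi 0)) (nhds 0) ∧
    Filter.Tendsto (fun q : ℝ => t q / Real.sqrt (-(2 * Real.log q)))
      (nhdsWithin 0 (Set.Ioi 0)) (nhds (-1)) :=
  normal_quantile_asymptotics' t ht
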